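/- For every positive integer n and 1 < k ≤ m, the identity Σ_{d^m·δ = n} μ_{k,m}(δ) evaluated at a prime power n = p^{ℓm} (ℓ ≥ 1) equals 0, at n = p^{ℓm+i} with 0 < i < k equals 1, and at n = p^{ℓm+i} with k ≤ i < m equals 0. -/
import Mathlib

def muLocal (k m α : ℕ) : ℤ :=
  if α < k then 1 else if α = m then -1 else 0

def mukm (k m n : ℕ) : ℤ :=
  if n = 0 then 0 else ∏ p ∈ n.primeFactors, muLocal k m (n.factorization p)

lemma mukm_prime_pow (k m p : ℕ) (hk : 0 < k) (hp : p.Prime) (α : ℕ) :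
    mukm k m (p ^ α) = muLocal k m α := by
  rcases Nat.eq_zero_or_pos α with rfl | hα
  · simp [mukm, muLocal, hk]
  · have hne : p ^ α ≠ 0 := pow_ne_zero _ hp.ne_zero
    have h1 : (p ^ α).primeFactors = {p} := by
      rw [Nat.primeFactors_pow _ hα.ne', hp.primeFactors]
    have h2 : (p ^ α).factorization p = α := by
      rw [hp.factorization_pow]; simp
    unfold mukm
    rw [if_neg hne, h1, Finset.prod_singleton, h2]

lemma sum_eq (k m : ℕ) (hm : 0 < m) (p : ℕ) (hp : p.Prime) (N : ℕ) :
    ∑ x ∈ ((p ^ N).divisors ×ˢ (p ^ N).divisors).filter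
        (fun x => x.1 ^ m * x.2 = p ^ N), mukm k m x.2
      = ∑ a ∈ Finset.range (N / m + 1), mukm k m (p ^ (N - m * a)) := by
  have hpne : p ^ N ≠ 0 := pow_ne_zero _ hp.ne_zero
  have hset : ((p ^ N).divisors ×ˢ (p ^ N).divisors).filter
      (fun x => x.1 ^ m * x.2 = p ^ N)
      = (Finset.range (N / m + 1)).image (fun a => (p ^ a, p ^ (N - m * a))) := by
    ext ⟨d, δ⟩
    simp only [Finset.mem_filter, Finset.mem_product, Nat.mem_divisors,
      Finset.mem_image, Finset.mem_range, Nat.lt_succ_iff, Prod.mk.injEq]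
    constructor
    · rintro ⟨⟨⟨h1, -⟩, h2, -⟩, heq⟩
      obtain ⟨a, ha, rfl⟩ := (Nat.dvd_prime_pow hp).mp h1
      have heq' : p ^ (a * m) * δ = p ^ N := by rwa [← pow_mul] at heq
      have hma : a * m ≤ N :=
        (Nat.pow_dvd_pow_iff_le_right hp.one_lt).mp ⟨δ, heq'.symm⟩
      have hδ : δ = p ^ (N - m * a) := by
        have h3 : p ^ (a * m) * δ = p ^ (a * m) * p ^ (N - m * a) := by
          rw [heq', ← pow_add]
          congr 1
          rw [Nat.mul_comm m a]
          omega
        exact Nat.eq_of_mul_eq_mul_left (pow_pos hp.pos _) h3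
      exact ⟨a, (Nat.le_div_iff_mul_le hm).mpr hma, rfl, hδ.symm⟩
    · rintro ⟨a, ha, rfl, rfl⟩
      have hma : m * a ≤ N := by
        rw [Nat.mul_comm]
        exact (Nat.le_div_iff_mul_le hm).mp ha
      have hkey : (p ^ a) ^ m * p ^ (N - m * a) = p ^ N := by
        rw [← pow_mul, ← pow_add]
        congr 1
        rw [Nat.mul_comm a m]
        omega
      have haN : a ≤ N := by
        have h1 := Nat.le_mul_of_pos_left a hm
        omega
      exact ⟨⟨⟨pow_dvd_pow _ haN, hpne⟩,
        ⟨pow_dvd_pow _ (by omega), hpne⟩⟩, hkey⟩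
  rw [hset, Finset.sum_image]
  intro a _ b _ h
  have := congrArg Prod.fst h
  simpa using Nat.pow_right_injective hp.two_le this

lemma muLocal_mul (k m : ℕ) (hk : 1 < k) (hkm : k ≤ m) (j : ℕ) (hj : 2 ≤ j) :
    muLocal k m (m * j) = 0 := by
  have h1 : m * 2 ≤ m * j := Nat.mul_le_mul_left m hj
  have : ¬ m * j < k := by omega
  have h2 : m * j ≠ m := by omega
  simp [muLocal, this, h2]

lemma sumA (k m : ℕ) (hk : 1 < k) (hkm : k ≤ m) (ℓ : ℕ) (hℓ : 1 ≤ ℓ) :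
    ∑ j ∈ Finset.range (ℓ + 1), muLocal k m (m * j) = 0 := by
  induction ℓ, hℓ using Nat.le_induction with
  | base =>
    rw [Finset.sum_range_succ, Finset.sum_range_one]
    have h1 : muLocal k m (m * 0) = 1 := by simp [muLocal]; omega
    have h2 : muLocal k m (m * 1) = -1 := by
      have : ¬ m < k := by omega
      simp [muLocal, this]
    rw [h1, h2]; ring
  | succ n hn ih =>
    rw [Finset.sum_range_succ, ih, muLocal_mul k m hk hkm _ (by omega)]
    ring

lemma sumB (k m : ℕ) (hk : 1 < k) (hkm : k ≤ m) (i : ℕ) (hi0 : 0 < i) (hik : i < k)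
    (ℓ : ℕ) :
    ∑ j ∈ Finset.range (ℓ + 1), muLocal k m (m * j + i) = 1 := by
  induction ℓ with
  | zero => simp [muLocal, hik]
  | succ n ih =>
    rw [Finset.sum_range_succ, ih]
    have h1 : m * 1 ≤ m * (n + 1) := Nat.mul_le_mul_left m (by omega)
    have h2 : ¬ m * (n + 1) + i < k := by omega
    have h3 : m * (n + 1) + i ≠ m := by omega
    simp [muLocal, h2, h3]

lemma sumC (k m : ℕ) (hk : 1 < k) (hkm : k ≤ m) (i : ℕ) (hki : k ≤ i) (him : i < m)
    (j : ℕ) : muLocal k m (m * j + i) = 0 := by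
  have h2 : ¬ m * j + i < k := by omega
  have h3 : m * j + i ≠ m := by
    rcases Nat.eq_zero_or_pos j with rfl | hj
    · omega
    · have : m * 1 ≤ m * j := Nat.mul_le_mul_left m hj
      omega
  simp [muLocal, h2, h3]

theorem sum_mukm_prime_pow (k m : ℕ) (hk : 1 < k) (hkm : k ≤ m)
    (p : ℕ) (hp : p.Prime) :
    (∀ ℓ : ℕ, 1 ≤ ℓ →
      ∑ x ∈ ((p ^ (ℓ * m)).divisors ×ˢ (p ^ (ℓ * m)).divisors).filter
          (fun x => x.1 ^ m * x.2 = p ^ (ℓ * m)), mukm k m x.2 = 0) ∧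
    (∀ ℓ i : ℕ, 0 < i → i < k →
      ∑ x ∈ ((p ^ (ℓ * m + i)).divisors ×ˢ (p ^ (ℓ * m + i)).divisors).filter
          (fun x => x.1 ^ m * x.2 = p ^ (ℓ * m + i)), mukm k m x.2 = 1) ∧
    (∀ ℓ i : ℕ, k ≤ i → i < m →
      ∑ x ∈ ((p ^ (ℓ * m + i)).divisors ×ˢ (p ^ (ℓ * m + i)).divisors).filter
          (fun x => x.1 ^ m * x.2 = p ^ (ℓ * m + i)), mukm k m x.2 = 0) := by
  have hm : 0 < m := by omega
  have hk0 : 0 < k := by omega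
  have hsub : ∀ ℓ a i : ℕ, a ≤ ℓ → ℓ * m + i - m * a = m * (ℓ - a) + i := by
    intro ℓ a i haℓ
    have h1 : m * a ≤ ℓ * m := by
      rw [Nat.mul_comm ℓ m]
      exact Nat.mul_le_mul_left m haℓ
    rw [Nat.mul_sub, Nat.mul_comm m ℓ]
    omega
  have hdiv : ∀ ℓ i : ℕ, i < m → (ℓ * m + i) / m = ℓ := by
    intro ℓ i him
    rw [Nat.mul_comm ℓ m, Nat.mul_add_div hm, Nat.div_eq_of_lt him, add_zero]
  refine ⟨?_, ?_, ?_⟩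
  · intro ℓ hℓ
    rw [sum_eq k m hm p hp, Nat.mul_div_cancel ℓ hm]
    have step : ∀ a ∈ Finset.range (ℓ + 1),
        mukm k m (p ^ (ℓ * m - m * a)) = muLocal k m (m * (ℓ - a)) := by
      intro a ha
      rw [mukm_prime_pow k m p hk0 hp]
      congr 1
      have haℓ : a ≤ ℓ := by simpa [Nat.lt_succ_iff] using ha
      have := hsub ℓ a 0 haℓ
      omega
    rw [Finset.sum_congr rfl step]
    have hrefl := Finset.sum_range_reflect (fun j => muLocal k m (m * j)) (ℓ + 1)
    simp only [Nat.add_sub_cancel] at hrefl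
    rw [hrefl]
    exact sumA k m hk hkm ℓ hℓ
  · intro ℓ i hi0 hik
    rw [sum_eq k m hm p hp, hdiv ℓ i (by omega)]
    have step : ∀ a ∈ Finset.range (ℓ + 1),
        mukm k m (p ^ (ℓ * m + i - m * a)) = muLocal k m (m * (ℓ - a) + i) := by
      intro a ha
      rw [mukm_prime_pow k m p hk0 hp, hsub ℓ a i (by simpa [Nat.lt_succ_iff] using ha)]
    rw [Finset.sum_congr rfl step]
    have hrefl := Finset.sum_range_reflect (fun j => muLocal k m (m * j + i)) (ℓ + 1)
    simp only [Nat.add_sub_cancel] at hrefl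
    rw [hrefl]
    exact sumB k m hk hkm i hi0 hik ℓ
  · intro ℓ i hki him
    rw [sum_eq k m hm p hp, hdiv ℓ i him]
    refine Finset.sum_eq_zero fun a ha => ?_
    rw [mukm_prime_pow k m p hk0 hp, hsub ℓ a i (by simpa [Nat.lt_succ_iff] using ha)]
    exact sumC k m hk hkm i hki him _
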